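/- Let ε, d* > 0 with εd* < 1, and let x, d be solutions of ẋ = 1 − εd, ḋ = x − βd with β > 0. Suppose at time t₀ we have d(t₀) = d*, ḋ(t₀) > 0 (i.e., x(t₀) > βd*). Then for t ≥ t₀, as long as d(t) ≤ 1/ε, both x and d are nondecreasing; in particular d must reach 1/ε before x can decrease below x(t₀) or d can return to d*. -/

import Mathlib

/-- Monotonicity in stage rXD: as long as `d ≤ 1/ε`, both `x` and `d` are nondecreasing. -/
theorem stmt5 (β ε dstar t₀ : ℝ) (x d : ℝ → ℝ)
    (hβ : 0 < β) (hε : 0 < ε) (hdstar : 0 < dstar) (hεd : ε * dstar < 1)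
    (hx : ∀ t, HasDerivAt x (1 - ε * d t) t)
    (hd : ∀ t, HasDerivAt d (x t - β * d t) t)
    (hdt0 : d t₀ = dstar) (hxt0 : β * dstar < x t₀) :
    ∀ t₁, t₀ ≤ t₁ → (∀ t ∈ Set.Icc t₀ t₁, d t ≤ 1 / ε) →
      MonotoneOn x (Set.Icc t₀ t₁) ∧ MonotoneOn d (Set.Icc t₀ t₁) ∧
        ∀ t ∈ Set.Icc t₀ t₁, x t₀ ≤ x t ∧ dstar ≤ d t := by
  intro t₁ ht₁ hle
  set G : ℝ → ℝ := fun t => (x t - β * d t) * Real.exp (β * t) with hGdef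
  have hG : ∀ t, HasDerivAt G ((1 - ε * d t) * Real.exp (β * t)) t := by
    intro t
    have h1 : HasDerivAt (fun t => x t - β * d t)
        ((1 - ε * d t) - β * (x t - β * d t)) t := by
      have := (hx t).sub (((hd t)).const_mul β)
      exact this
    have h2 : HasDerivAt (fun t => Real.exp (β * t)) (β * Real.exp (β * t)) t := by
      have := (Real.hasDerivAt_exp (β * t)).comp t ((hasDerivAt_id t).const_mul β)
      exact this.congr_deriv (by ring)
    have := h1.mul h2
    exact this.congr_deriv (by ring)
  have hGmono : MonotoneOn G (Set.Icc t₀ t₁) := by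
    apply monotoneOn_of_deriv_nonneg (convex_Icc t₀ t₁)
    · exact fun t _ => (hG t).continuousAt.continuousWithinAt
    · exact fun t _ => ((hG t).differentiableAt).differentiableWithinAt
    · intro t ht
      rw [interior_Icc] at ht
      rw [(hG t).deriv]
      have hd1 : d t ≤ 1 / ε := hle t ⟨le_of_lt ht.1, le_of_lt ht.2⟩
      have h1 : ε * d t ≤ 1 := by
        rw [le_div_iff₀ hε] at hd1; linarith [hd1]
      exact mul_nonneg (by linarith) (Real.exp_pos _).le
  have hGpos : ∀ t ∈ Set.Icc t₀ t₁, 0 < x t - β * d t := by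
    intro t ht
    have hG0 : G t₀ ≤ G t := hGmono (Set.left_mem_Icc.2 ht₁) ht ht.1
    have h0 : 0 < G t₀ := by
      have : 0 < x t₀ - β * d t₀ := by rw [hdt0]; linarith
      exact mul_pos this (Real.exp_pos _)
    have : 0 < G t := lt_of_lt_of_le h0 hG0
    have hexp : 0 < Real.exp (β * t) := Real.exp_pos _
    have hgt : 0 < (x t - β * d t) * Real.exp (β * t) := this
    nlinarith [hgt, hexp]
  have hdmono : MonotoneOn d (Set.Icc t₀ t₁) := by
    apply monotoneOn_of_deriv_nonneg (convex_Icc t₀ t₁)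
    · exact fun t _ => (hd t).continuousAt.continuousWithinAt
    · exact fun t _ => ((hd t).differentiableAt).differentiableWithinAt
    · intro t ht
      rw [interior_Icc] at ht
      rw [(hd t).deriv]
      exact le_of_lt (hGpos t ⟨le_of_lt ht.1, le_of_lt ht.2⟩)
  have hxmono : MonotoneOn x (Set.Icc t₀ t₁) := by
    apply monotoneOn_of_deriv_nonneg (convex_Icc t₀ t₁)
    · exact fun t _ => (hx t).continuousAt.continuousWithinAt
    · exact fun t _ => ((hx t).differentiableAt).differentiableWithinAt
    · intro t ht
      rw [interior_Icc] at ht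
      rw [(hx t).deriv]
      have hd1 : d t ≤ 1 / ε := hle t ⟨le_of_lt ht.1, le_of_lt ht.2⟩
      have : ε * d t ≤ 1 := by rw [le_div_iff₀ hε] at hd1; linarith [hd1]
      linarith
  refine ⟨hxmono, hdmono, fun t ht => ⟨?_, ?_⟩⟩
  · exact hxmono (Set.left_mem_Icc.2 ht₁) ht ht.1
  · rw [← hdt0]; exact hdmono (Set.left_mem_Icc.2 ht₁) ht ht.1
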